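/- Suppose v₁, …, v_N ∈ ℂ^(2N) are eigenvectors of D with D v_n = μ_n v_n where each μ_n is a positive real number, and set u_n = Γ v̄_n. Assume the 2N vectors v₁, …, v_N, u₁, …, u_N are pairwise orthogonal with respect to the R-inner product (⟨w, w'⟩ = 0 for any two distinct vectors w, w' among them) and that ⟨v_n, v_n⟩ = 1 for each n. Then the matrix T whose first N columns are v₁, …, v_N and whose last N columns are u₁, …, u_N is a normal mode transformation with the given μ₁, …, μ_N: it satisfies Tᴴ R T = Σ, T = Γ T̄ Γ, and T⁻¹ D T = diag(μ₁, …, μ_N, −μ₁, …, −μ_N). -/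

import Mathlib

open Matrix

namespace Stmt5Aux

variable {N : ℕ}

def sw : Fin N ⊕ Fin N → Fin N ⊕ Fin N := Sum.elim Sum.inr Sum.inl

lemma sw_sw (a : Fin N ⊕ Fin N) : sw (sw a) = a := by cases a <;> rfl

lemma gamma_apply (a b : Fin N ⊕ Fin N) :
    (Matrix.fromBlocks (0 : Matrix (Fin N) (Fin N) ℂ) 1 1 0) a b
      = if sw a = b then 1 else 0 := by
  cases a <;> cases b <;>
    simp [sw, Matrix.one_apply, Sum.inr.injEq, Sum.inl.injEq]

lemma gamma_apply' (a b : Fin N ⊕ Fin N) :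
    (Matrix.fromBlocks (0 : Matrix (Fin N) (Fin N) ℂ) 1 1 0) a b
      = if a = sw b then 1 else 0 := by
  cases a <;> cases b <;>
    simp [sw, Matrix.one_apply, Sum.inr.injEq, Sum.inl.injEq, eq_comm]

lemma gamma_mulVec (x : Fin N ⊕ Fin N → ℂ) (a : Fin N ⊕ Fin N) :
    (Matrix.fromBlocks (0 : Matrix (Fin N) (Fin N) ℂ) 1 1 0).mulVec x a = x (sw a) := by
  simp [Matrix.mulVec, dotProduct, gamma_apply, ite_mul]

lemma gamma_mul (X : Matrix (Fin N ⊕ Fin N) (Fin N ⊕ Fin N) ℂ) (a b : Fin N ⊕ Fin N) :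
    ((Matrix.fromBlocks (0 : Matrix (Fin N) (Fin N) ℂ) 1 1 0) * X : Matrix _ _ ℂ) a b
      = X (sw a) b := by
  simp [Matrix.mul_apply, gamma_apply, ite_mul]

lemma mul_gamma (X : Matrix (Fin N ⊕ Fin N) (Fin N ⊕ Fin N) ℂ) (a b : Fin N ⊕ Fin N) :
    (X * (Matrix.fromBlocks (0 : Matrix (Fin N) (Fin N) ℂ) 1 1 0) : Matrix _ _ ℂ) a b
      = X a (sw b) := by
  simp [Matrix.mul_apply, gamma_apply', mul_ite]

lemma star_mulVec' (A : Matrix (Fin N ⊕ Fin N) (Fin N ⊕ Fin N) ℂ) (x : Fin N ⊕ Fin N → ℂ) :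
    star (A.mulVec x) = (A.map (starRingEnd ℂ)).mulVec (star x) := by
  funext j
  simp [Matrix.mulVec, dotProduct, map_sum, Matrix.map_apply]

lemma star_dot (x y : Fin N ⊕ Fin N → ℂ) : star (x ⬝ᵥ y) = star x ⬝ᵥ star y := by
  simp [dotProduct, map_sum, mul_comm]

end Stmt5Aux

open Stmt5Aux

set_option maxHeartbeats 1000000 in
/-- an R-orthonormal family of eigenvectors of `D` with positive eigenvalues,
together with their conjugate partners, assembles into a normal mode transformation. -/
theorem stmt_5 {N : ℕ} (hN : 0 < N)
    (R Ω : Matrix (Fin N ⊕ Fin N) (Fin N ⊕ Fin N) ℂ)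
    (hR : R.IsHermitian) (hΩ : Ω.IsHermitian)
    (Γ Sig : Matrix (Fin N ⊕ Fin N) (Fin N ⊕ Fin N) ℂ)
    (hΓ : Γ = Matrix.fromBlocks 0 1 1 0)
    (hSig : Sig = Matrix.fromBlocks 1 0 0 (-1))
    (hRconj : Γ * R.map (starRingEnd ℂ) * Γ = -R)
    (hΩconj : Γ * Ω.map (starRingEnd ℂ) * Γ = Ω)
    (hRunit : IsUnit R.det)
    (D : Matrix (Fin N ⊕ Fin N) (Fin N ⊕ Fin N) ℂ) (hD : D = R⁻¹ * Ω)
    (v : Fin N → (Fin N ⊕ Fin N) → ℂ) (μ : Fin N → ℝ)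
    (hμpos : ∀ i, 0 < μ i)
    (heig : ∀ i, D.mulVec (v i) = (μ i : ℂ) • v i)
    (u : Fin N → (Fin N ⊕ Fin N) → ℂ)
    (hu : ∀ i, u i = Γ.mulVec (star (v i)))
    (horth : ∀ a b : Fin N ⊕ Fin N, a ≠ b →
      star (Sum.elim v u a) ⬝ᵥ R.mulVec (Sum.elim v u b) = 0)
    (hnorm : ∀ i, star (v i) ⬝ᵥ R.mulVec (v i) = 1)
    (T : Matrix (Fin N ⊕ Fin N) (Fin N ⊕ Fin N) ℂ)
    (hT : T = Matrix.of fun i j => Sum.elim v u j i) :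
    Tᴴ * R * T = Sig ∧ T = Γ * T.map (starRingEnd ℂ) * Γ ∧
      T⁻¹ * D * T
        = Matrix.diagonal (Sum.elim (fun i => (μ i : ℂ)) fun i => -(μ i : ℂ)) := by
  subst hΓ
  set Γ : Matrix (Fin N ⊕ Fin N) (Fin N ⊕ Fin N) ℂ := Matrix.fromBlocks 0 1 1 0 with hΓ
  -- basic Γ facts
  have hΓΓ : Γ * Γ = 1 := by
    ext a b
    rw [hΓ, gamma_mul, gamma_apply']
    cases a <;> cases b <;> simp [sw, Matrix.one_apply, eq_comm]
  have hΓc : Γ.map (starRingEnd ℂ) = Γ := by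
    ext a b
    rw [hΓ, Matrix.map_apply, gamma_apply]
    split <;> simp
  -- rearranged conjugation relations
  have hΩΓ : Ω * Γ = Γ * Ω.map (starRingEnd ℂ) := by
    have := congrArg (· * Γ) hΩconj
    simpa [mul_assoc, hΓΓ] using this.symm
  have hΓRc : Γ * R.map (starRingEnd ℂ) = -(R * Γ) := by
    have := congrArg (· * Γ) hRconj
    simp only [mul_assoc, hΓΓ, mul_one, neg_mul] at this
    simpa [mul_assoc] using this
  have hΓRΓ : Γ * R * Γ = -(R.map (starRingEnd ℂ)) := by
    have h1 : Γ * (Γ * R.map (starRingEnd ℂ) * Γ) * Γ = Γ * (-R) * Γ := by rw [hRconj]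
    have h2 : Γ * (Γ * R.map (starRingEnd ℂ) * Γ) * Γ = R.map (starRingEnd ℂ) := by
      calc Γ * (Γ * R.map (starRingEnd ℂ) * Γ) * Γ = (Γ * Γ) * R.map (starRingEnd ℂ) * (Γ * Γ) := by
            simp only [mul_assoc]
        _ = R.map (starRingEnd ℂ) := by rw [hΓΓ]; simp
    rw [h2] at h1
    rw [h1]
    simp [mul_assoc, Matrix.neg_mul, Matrix.mul_neg]
  -- inverse facts
  have hRinv : R⁻¹ * R = 1 := Matrix.nonsing_inv_mul R hRunit
  have hRinv' : R * R⁻¹ = 1 := Matrix.mul_nonsing_inv R hRunit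
  -- eigen relation for Ω
  have hΩv : ∀ i, Ω.mulVec (v i) = (μ i : ℂ) • R.mulVec (v i) := by
    intro i
    have h1 : R.mulVec (D.mulVec (v i)) = Ω.mulVec (v i) := by
      rw [hD, Matrix.mulVec_mulVec, ← mul_assoc, hRinv', one_mul]
    rw [heig i] at h1
    rw [← h1, Matrix.mulVec_smul]
  -- Ω action on u
  have hΩu : ∀ i, Ω.mulVec (u i) = (-(μ i) : ℂ) • R.mulVec (u i) := by
    intro i
    have key : Ω.mulVec (u i) = Γ.mulVec (star (Ω.mulVec (v i))) := by
      rw [hu i, Matrix.mulVec_mulVec, hΩΓ, ← Matrix.mulVec_mulVec,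
        star_mulVec']
    rw [key, hΩv i]
    have h2 : star ((μ i : ℂ) • R.mulVec (v i)) = (μ i : ℂ) • star (R.mulVec (v i)) := by
      funext j
      simp [Complex.conj_ofReal]
    rw [h2, Matrix.mulVec_smul, star_mulVec', Matrix.mulVec_mulVec, hΓRc]
    rw [hu i]
    funext j
    simp only [Matrix.neg_mulVec, ← Matrix.mulVec_mulVec, Pi.smul_apply, Pi.neg_apply,
      smul_eq_mul, neg_mul]
    ring
  -- D action on u
  have hDu : ∀ i, D.mulVec (u i) = (-(μ i) : ℂ) • u i := by
    intro i
    rw [hD, ← Matrix.mulVec_mulVec, hΩu i, Matrix.mulVec_smul,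
      Matrix.mulVec_mulVec, hRinv, Matrix.one_mulVec]
  -- star of u
  have hstaru : ∀ i, star (u i) = Γ.mulVec (v i) := by
    intro i
    rw [hu i, star_mulVec', hΓc, star_star]
  -- Γ moves across dot products
  have gdot : ∀ x y : (Fin N ⊕ Fin N) → ℂ,
      Γ.mulVec x ⬝ᵥ y = x ⬝ᵥ Γ.mulVec y := by
    intro x y
    simp only [hΓ, dotProduct, gamma_mulVec]
    exact Fintype.sum_equiv ⟨sw, sw, sw_sw, sw_sw⟩ _ _
      (fun a => by simp [sw_sw])
  -- norm of u
  have hunorm : ∀ i, star (u i) ⬝ᵥ R.mulVec (u i) = -1 := by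
    intro i
    rw [hstaru i, hu i, gdot, Matrix.mulVec_mulVec, Matrix.mulVec_mulVec,
      hΓRΓ, Matrix.neg_mulVec, dotProduct_neg]
    have h3 : v i ⬝ᵥ (R.map (starRingEnd ℂ)).mulVec (star (v i))
        = star (star (v i) ⬝ᵥ R.mulVec (v i)) := by
      rw [star_dot, star_star, star_mulVec']
    rw [h3, hnorm i]
    simp
  -- GOAL 1
  have hG1 : Tᴴ * R * T = Sig := by
    have key : ∀ a b, (Tᴴ * R * T) a b
        = star (Sum.elim v u a) ⬝ᵥ R.mulVec (Sum.elim v u b) := by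
      intro a b
      rw [mul_assoc, Matrix.mul_apply]
      simp only [Matrix.conjTranspose_apply, Matrix.mul_apply, hT, Matrix.of_apply,
        dotProduct, Matrix.mulVec, Finset.mul_sum, Pi.star_apply]
    ext a b
    rw [key a b]
    by_cases hab : a = b
    · subst hab
      cases a with
      | inl i =>
        have := hnorm i
        simp only [Sum.elim_inl]
        rw [this, hSig]
        simp [Matrix.one_apply]
      | inr i =>
        have := hunorm i
        simp only [Sum.elim_inr]
        rw [this, hSig]
        simp [Matrix.one_apply]
    · rw [horth a b hab, hSig]
      rcases a with i | i <;> rcases b with j | j <;>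
        simp_all [Matrix.one_apply, Sum.inl.injEq, Sum.inr.injEq]
  -- GOAL 2
  have hG2 : T = Γ * T.map (starRingEnd ℂ) * Γ := by
    ext a b
    rw [hΓ, mul_gamma, gamma_mul, Matrix.map_apply]
    simp only [hT, Matrix.of_apply]
    cases b with
    | inl i =>
      rw [show sw (Sum.inl i : Fin N ⊕ Fin N) = Sum.inr i from rfl]
      simp only [hT, Matrix.of_apply, Sum.elim_inl, Sum.elim_inr]
      rw [hu i, hΓ, gamma_mulVec, sw_sw]
      simp
    | inr i =>
      rw [show sw (Sum.inr i : Fin N ⊕ Fin N) = Sum.inl i from rfl]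
      simp only [hT, Matrix.of_apply, Sum.elim_inl, Sum.elim_inr]
      rw [hu i, hΓ, gamma_mulVec]
      simp
  refine ⟨hG1, hG2, ?_⟩
  -- GOAL 3
  have hDT : D * T = T * Matrix.diagonal
      (Sum.elim (fun i => (μ i : ℂ)) fun i => -(μ i : ℂ)) := by
    ext a b
    rw [Matrix.mul_diagonal]
    have hmv : (D * T) a b = D.mulVec (fun k => T k b) a := by
      rw [Matrix.mul_apply]; rfl
    rw [hmv]
    cases b with
    | inl i =>
      have h := congrFun (heig i) a
      simp only [hT, Matrix.of_apply, Sum.elim_inl]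
      simp only [Pi.smul_apply, smul_eq_mul] at h
      rw [show (fun k => v i k) = v i from rfl, h]
      ring
    | inr i =>
      have h := congrFun (hDu i) a
      simp only [hT, Matrix.of_apply, Sum.elim_inr]
      simp only [Pi.smul_apply, smul_eq_mul] at h
      rw [show (fun k => u i k) = u i from rfl, h]
      ring
  have hTdet : IsUnit T.det := by
    have hd := congrArg Matrix.det hG1
    rw [Matrix.det_mul, Matrix.det_mul] at hd
    have hSS : Sig * Sig = 1 := by
      rw [hSig, Matrix.fromBlocks_multiply]
      simp [Matrix.fromBlocks_one]
    have hds : IsUnit Sig.det :=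
      IsUnit.of_mul_eq_one _ (by rw [← Matrix.det_mul, hSS, Matrix.det_one])
    rw [← hd] at hds
    exact isUnit_of_mul_isUnit_right hds
  rw [mul_assoc, hDT, ← mul_assoc, Matrix.nonsing_inv_mul T hTdet, one_mul]
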